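/- With the data E₀, E₁, π₀, π₁, U, T₀, T₁, N₀, N₁ and V(T₀,T₁) as in the context: if π₀(N₀) ⊆ T₀ and π₁(N₁) ⊆ T₁ (i.e. T₀ and T₁ are coisotropic for π₀ and π₁ respectively), then V(T₀,T₁)^⊥ ⊆ V(T₀,T₁); that is, V(T₀,T₁) is a coisotropic subspace of (W(E₀), Ω). -/

import Mathlib

open MeasureTheory Set

/-- An element of `W(E)`: a pair `(λ, φ)` of continuous maps on `[0,1]` with values in `E`
and in the dual `E* = E →L[ℝ] ℝ` respectively. -/
structure WPair (E : Type*) [NormedAddCommGroup E] [NormedSpace ℝ E] where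
  lam : ℝ → E
  phi : ℝ → E →L[ℝ] ℝ
  lam_cont : ContinuousOn lam (Icc 0 1)
  phi_cont : ContinuousOn phi (Icc 0 1)

/-- The alternating bilinear form `Ω((λ,φ),(λ',φ')) = ∫₀¹ (φ(u)(λ'(u)) − φ'(u)(λ(u))) du`. -/
noncomputable def Omega {E : Type*} [NormedAddCommGroup E] [NormedSpace ℝ E]
    (w w' : WPair E) : ℝ :=
  ∫ u in (0:ℝ)..(1:ℝ), (w.phi u (w'.lam u) - w'.phi u (w.lam u))

/-- The `Ω`-orthogonal of a subset of `W(E)`. -/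
def orth {E : Type*} [NormedAddCommGroup E] [NormedSpace ℝ E] (A : Set (WPair E)) :
    Set (WPair E) :=
  {w | ∀ a ∈ A, Omega a w = 0}

/-- The annihilator `N = { α ∈ E* : α vanishes on T }` of a subspace `T ⊆ E`. -/
def Ann {E : Type*} [NormedAddCommGroup E] [NormedSpace ℝ E] (T : Submodule ℝ E) :
    Set (E →L[ℝ] ℝ) :=
  {α | ∀ v ∈ T, α v = 0}

/-- The space `V(T₀,T₁)` of solutions `(λ,φ)` of `λ(u) = λ(0) − π₀ ∫₀ᵘ φ` with boundary
conditions `λ(0) ∈ T₀` and `U⁻¹(λ(1)) ∈ T₁`. -/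
noncomputable def VSet {E₀ E₁ : Type*}
    [NormedAddCommGroup E₀] [NormedSpace ℝ E₀]
    [NormedAddCommGroup E₁] [NormedSpace ℝ E₁]
    (π₀ : (E₀ →L[ℝ] ℝ) →ₗ[ℝ] E₀) (U : E₁ ≃L[ℝ] E₀)
    (T₀ : Submodule ℝ E₀) (T₁ : Submodule ℝ E₁) : Set (WPair E₀) :=
  {w | (∀ u ∈ Icc (0:ℝ) 1, w.lam u = w.lam 0 - π₀ (∫ s in (0:ℝ)..u, w.phi s)) ∧
       w.lam 0 ∈ T₀ ∧ U.symm (w.lam 1) ∈ T₁}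

lemma contOn_intervalIntegrable {X : Type*} [NormedAddCommGroup X] {r : ℝ → X}
    (hr : ContinuousOn r (Icc 0 1)) {a b : ℝ} (ha : a ∈ Icc (0:ℝ) 1) (hb : b ∈ Icc (0:ℝ) 1) :
    IntervalIntegrable r volume a b :=
  (hr.mono (uIcc_subset_Icc ha hb)).intervalIntegrable

lemma primitive_contOn {X : Type*} [NormedAddCommGroup X] [NormedSpace ℝ X] {r : ℝ → X}
    (hr : ContinuousOn r (Icc 0 1)) :
    ContinuousOn (fun u => ∫ s in (0:ℝ)..u, r s) (Icc 0 1) := by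
  have h := intervalIntegral.continuousOn_primitive_interval (a := 0) (b := 1) (f := r)
    (μ := volume) ?_
  · rwa [uIcc_of_le (by norm_num : (0:ℝ) ≤ 1)] at h
  · rw [uIcc_of_le (by norm_num : (0:ℝ) ≤ 1)]; exact hr.integrableOn_Icc

lemma const_of_integral_mul_eq_zero (h : ℝ → ℝ) (hc : ContinuousOn h (Icc 0 1))
    (H : ∀ g : ℝ → ℝ, ContinuousOn g (Icc 0 1) → (∫ u in (0:ℝ)..1, g u) = 0 →
      (∫ u in (0:ℝ)..1, g u * h u) = 0) :
    ∀ u ∈ Icc (0:ℝ) 1, h u = ∫ s in (0:ℝ)..1, h s := by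
  have h01 : (0:ℝ) ∈ Icc (0:ℝ) 1 := by norm_num
  have h11 : (1:ℝ) ∈ Icc (0:ℝ) 1 := by norm_num
  set c := ∫ s in (0:ℝ)..1, h s with hcdef
  have hint : IntervalIntegrable h volume 0 1 := contOn_intervalIntegrable hc h01 h11
  have hgc : ContinuousOn (fun u => h u - c) (Icc 0 1) := hc.sub continuousOn_const
  have hg0 : (∫ u in (0:ℝ)..1, (h u - c)) = 0 := by
    rw [intervalIntegral.integral_sub hint intervalIntegrable_const,
      intervalIntegral.integral_const]
    simp [hcdef]
  have h1 : (∫ u in (0:ℝ)..1, (h u - c) * h u) = 0 := H _ hgc hg0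
  have h2 : (∫ u in (0:ℝ)..1, (h u - c) * c) = 0 := by
    rw [intervalIntegral.integral_mul_const, hg0, zero_mul]
  have hq : (∫ u in (0:ℝ)..1, (h u - c)^2) = 0 := by
    have heq : ∀ u : ℝ, (h u - c)^2 = (h u - c) * h u - (h u - c) * c := by intro u; ring
    simp_rw [heq]
    rw [intervalIntegral.integral_sub (f := fun u => (h u - c) * h u) (g := fun u => (h u - c) * c)
      ((hgc.mul hc).intervalIntegrable_of_Icc (by norm_num))
      ((hgc.mul continuousOn_const).intervalIntegrable_of_Icc (by norm_num)), h1, h2, sub_zero]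
  intro u hu
  by_contra hne
  have hne' : h u - c ≠ 0 := sub_ne_zero.mpr hne
  have hpos : 0 < ∫ u in (0:ℝ)..1, (h u - c)^2 := by
    apply intervalIntegral.integral_pos (by norm_num)
    · exact hgc.pow 2
    · intro x _; positivity
    · exact ⟨u, hu, lt_of_le_of_ne (sq_nonneg _) (Ne.symm (pow_ne_zero 2 hne'))⟩
  rw [hq] at hpos; exact lt_irrefl 0 hpos

lemma keyA {E₀ E₁ : Type*}
    [NormedAddCommGroup E₀] [NormedSpace ℝ E₀] [FiniteDimensional ℝ E₀]
    [NormedAddCommGroup E₁] [NormedSpace ℝ E₁]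
    (π₀ : (E₀ →L[ℝ] ℝ) →ₗ[ℝ] E₀)
    (hskew₀ : ∀ α β : E₀ →L[ℝ] ℝ, α (π₀ β) = - β (π₀ α))
    (U : E₁ ≃L[ℝ] E₀) (T₀ : Submodule ℝ E₀) (T₁ : Submodule ℝ E₁)
    (w : WPair E₀) (hw : w ∈ orth (VSet π₀ U T₀ T₁))
    (α : E₀ →L[ℝ] ℝ) (g : ℝ → ℝ) (hg : ContinuousOn g (Icc 0 1))
    (x : E₀) (hx : x ∈ T₀)
    (hbd : U.symm (x - (∫ s in (0:ℝ)..1, g s) • π₀ α) ∈ T₁) :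
    (∫ u in (0:ℝ)..1, g u * α (w.lam u + π₀ (∫ s in (0:ℝ)..u, w.phi s)))
      = (∫ s in (0:ℝ)..1, w.phi s) x
        + (∫ s in (0:ℝ)..1, g s) * α (π₀ (∫ s in (0:ℝ)..1, w.phi s)) := by
  have h01 : (0:ℝ) ∈ Icc (0:ℝ) 1 := by norm_num
  have h11 : (1:ℝ) ∈ Icc (0:ℝ) 1 := by norm_num
  set π₀' : (E₀ →L[ℝ] ℝ) →L[ℝ] E₀ := LinearMap.toContinuousLinearMap π₀ with hπ₀'
  have hπ : ∀ β, π₀' β = π₀ β := fun β => rfl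
  have hφint : ∀ a b, a ∈ Icc (0:ℝ) 1 → b ∈ Icc (0:ℝ) 1 →
      IntervalIntegrable w.phi volume a b :=
    fun a b ha hb => contOn_intervalIntegrable w.phi_cont ha hb
  set G : ℝ → ℝ := fun u => ∫ s in (0:ℝ)..u, g s with hGdef
  set f : ℝ → ℝ := fun u => α (π₀ (w.phi u)) with hfdef
  set F : ℝ → ℝ := fun u => ∫ s in (0:ℝ)..u, f s with hFdef
  have hfcont : ContinuousOn f (Icc 0 1) := by
    have heq : f = fun u => (α.comp π₀') (w.phi u) := by
      funext u; rw [ContinuousLinearMap.comp_apply, hπ]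
    rw [heq]
    exact (α.comp π₀').continuous.comp_continuousOn w.phi_cont
  have hGcont : ContinuousOn G (Icc 0 1) := primitive_contOn hg
  have hFcont : ContinuousOn F (Icc 0 1) := primitive_contOn hfcont
  have hgint : ∀ a b, a ∈ Icc (0:ℝ) 1 → b ∈ Icc (0:ℝ) 1 → IntervalIntegrable g volume a b :=
    fun a b ha hb => contOn_intervalIntegrable hg ha hb
  have hfint : ∀ a b, a ∈ Icc (0:ℝ) 1 → b ∈ Icc (0:ℝ) 1 → IntervalIntegrable f volume a b :=
    fun a b ha hb => contOn_intervalIntegrable hfcont ha hb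
  have hFeq : ∀ u ∈ Icc (0:ℝ) 1, F u = α (π₀ (∫ s in (0:ℝ)..u, w.phi s)) := by
    intro u hu
    have h := (α.comp π₀').intervalIntegral_comp_comm (hφint 0 u h01 hu)
    simp only [ContinuousLinearMap.comp_apply, hπ] at h
    exact h
  -- the test pair
  have hacont : ContinuousOn (fun u => x - G u • π₀ α) (Icc 0 1) :=
    continuousOn_const.sub (hGcont.smul continuousOn_const)
  have hbcont : ContinuousOn (fun u : ℝ => g u • α) (Icc 0 1) := hg.smul continuousOn_const
  set a : WPair E₀ := ⟨fun u => x - G u • π₀ α, fun u => g u • α, hacont, hbcont⟩ with hadef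
  have haV : a ∈ VSet π₀ U T₀ T₁ := by
    refine ⟨?_, ?_, ?_⟩
    · intro u hu
      show x - G u • π₀ α = (x - G 0 • π₀ α) - π₀ (∫ s in (0:ℝ)..u, g s • α)
      rw [intervalIntegral.integral_smul_const, _root_.map_smul]
      have hG0 : G 0 = 0 := intervalIntegral.integral_same
      rw [hG0, zero_smul, sub_zero]
    · show x - G 0 • π₀ α ∈ T₀
      have : G 0 = 0 := intervalIntegral.integral_same
      rw [this, zero_smul, sub_zero]; exact hx
    · show U.symm (x - G 1 • π₀ α) ∈ T₁
      exact hbd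
  have hΩ : Omega a w = 0 := hw a haV
  -- rewrite Omega
  have hrew : (∫ u in (0:ℝ)..1, (a.phi u (w.lam u) - w.phi u (a.lam u)))
      = ∫ u in (0:ℝ)..1, (g u * α (w.lam u) - w.phi u x - G u * f u) := by
    apply intervalIntegral.integral_congr
    intro u hu
    show (g u • α) (w.lam u) - w.phi u (x - G u • π₀ α)
      = g u * α (w.lam u) - w.phi u x - G u * f u
    have hs : (w.phi u) (π₀ α) = - α (π₀ (w.phi u)) := hskew₀ (w.phi u) α
    rw [ContinuousLinearMap.smul_apply, map_sub, _root_.map_smul, hs, hfdef]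
    simp only [smul_eq_mul, smul_neg]
    ring
  have hΩ' : (∫ u in (0:ℝ)..1, (g u * α (w.lam u) - w.phi u x - G u * f u)) = 0 := by
    rw [← hrew]; exact hΩ
  -- integrability pieces
  have int1 : IntervalIntegrable (fun u => g u * α (w.lam u)) volume 0 1 :=
    (hg.mul (α.continuous.comp_continuousOn w.lam_cont)).intervalIntegrable_of_Icc
      (by norm_num)
  have int2 : IntervalIntegrable (fun u => w.phi u x) volume 0 1 :=
    (((ContinuousLinearMap.apply ℝ ℝ x).continuous.comp_continuousOn
      w.phi_cont).intervalIntegrable_of_Icc (by norm_num))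
  have int3 : IntervalIntegrable (fun u => G u * f u) volume 0 1 :=
    ((hGcont.mul hfcont).intervalIntegrable_of_Icc (by norm_num))
  have int4 : IntervalIntegrable (fun u => g u * F u) volume 0 1 :=
    ((hg.mul hFcont).intervalIntegrable_of_Icc (by norm_num))
  -- integration by parts via FTC
  have hderiv : ∀ u ∈ Ioo (0:ℝ) 1,
      HasDerivAt (fun u => G u * F u) (g u * F u + G u * f u) u := by
    intro u hu
    have hiu : u ∈ Icc (0:ℝ) 1 := Ioo_subset_Icc_self hu
    have hGd : HasDerivAt G (g u) u :=
      intervalIntegral.integral_hasDerivAt_right (hgint 0 u h01 hiu)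
        (ContinuousOn.stronglyMeasurableAtFilter isOpen_Ioo (hg.mono Ioo_subset_Icc_self) u hu)
        ((hg.mono Ioo_subset_Icc_self).continuousAt (isOpen_Ioo.mem_nhds hu))
    have hFd : HasDerivAt F (f u) u :=
      intervalIntegral.integral_hasDerivAt_right (hfint 0 u h01 hiu)
        (ContinuousOn.stronglyMeasurableAtFilter isOpen_Ioo (hfcont.mono Ioo_subset_Icc_self) u hu)
        ((hfcont.mono Ioo_subset_Icc_self).continuousAt (isOpen_Ioo.mem_nhds hu))
    exact hGd.mul hFd
  have hIBP : (∫ u in (0:ℝ)..1, (g u * F u + G u * f u)) = G 1 * F 1 := by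
    have h := intervalIntegral.integral_eq_sub_of_hasDeriv_right_of_le (by norm_num)
      (hGcont.mul hFcont) (fun u hu => (hderiv u hu).hasDerivWithinAt)
      (int4.add int3)
    have hG0 : G 0 = 0 := intervalIntegral.integral_same
    have hF0 : F 0 = 0 := intervalIntegral.integral_same
    rw [h, Pi.mul_apply, Pi.mul_apply, hG0, hF0, mul_zero, sub_zero]
  -- evaluation of the linear part
  have e3 : (∫ u in (0:ℝ)..1, w.phi u x) = (∫ s in (0:ℝ)..1, w.phi s) x :=
    (ContinuousLinearMap.intervalIntegral_apply (hφint 0 1 h01 h11) x).symm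
  -- assemble
  have hcongr : (∫ u in (0:ℝ)..1, g u * α (w.lam u + π₀ (∫ s in (0:ℝ)..u, w.phi s)))
      = ∫ u in (0:ℝ)..1, ((g u * α (w.lam u) - w.phi u x - G u * f u)
        + (w.phi u x) + (g u * F u + G u * f u)) := by
    apply intervalIntegral.integral_congr
    intro u hu
    rw [uIcc_of_le (by norm_num : (0:ℝ) ≤ 1)] at hu
    simp only [map_add]
    rw [← hFeq u hu]
    ring
  rw [hcongr, intervalIntegral.integral_add (((int1.sub int2).sub int3).add int2)
    (int4.add int3), intervalIntegral.integral_add ((int1.sub int2).sub int3) int2,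
    hΩ', e3, hIBP, hFeq 1 h11, zero_add, hGdef]

theorem VSet_coisotropic_of_coisotropic_boundary
    (E₀ E₁ : Type*)
    [NormedAddCommGroup E₀] [NormedSpace ℝ E₀] [FiniteDimensional ℝ E₀]
    [NormedAddCommGroup E₁] [NormedSpace ℝ E₁] [FiniteDimensional ℝ E₁]
    (π₀ : (E₀ →L[ℝ] ℝ) →ₗ[ℝ] E₀) (π₁ : (E₁ →L[ℝ] ℝ) →ₗ[ℝ] E₁)
    (hskew₀ : ∀ α β : E₀ →L[ℝ] ℝ, α (π₀ β) = - β (π₀ α))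
    (hskew₁ : ∀ α β : E₁ →L[ℝ] ℝ, α (π₁ β) = - β (π₁ α))
    (U : E₁ ≃L[ℝ] E₀)
    (hU : ∀ α : E₀ →L[ℝ] ℝ, U (π₁ (α.comp (U : E₁ →L[ℝ] E₀))) = π₀ α)
    (T₀ : Submodule ℝ E₀) (T₁ : Submodule ℝ E₁)
    (hT₀ : ∀ α ∈ Ann T₀, π₀ α ∈ T₀) (hT₁ : ∀ α ∈ Ann T₁, π₁ α ∈ T₁) :
    orth (VSet π₀ U T₀ T₁) ⊆ VSet π₀ U T₀ T₁ := by
  intro w hw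
  have h01 : (0:ℝ) ∈ Icc (0:ℝ) 1 := by norm_num
  have h11 : (1:ℝ) ∈ Icc (0:ℝ) 1 := by norm_num
  set π₀' : (E₀ →L[ℝ] ℝ) →L[ℝ] E₀ := LinearMap.toContinuousLinearMap π₀ with hπ₀'
  have hπ : ∀ β, π₀' β = π₀ β := fun β => rfl
  have hφint : ∀ a b, a ∈ Icc (0:ℝ) 1 → b ∈ Icc (0:ℝ) 1 →
      IntervalIntegrable w.phi volume a b :=
    fun a b ha hb => contOn_intervalIntegrable w.phi_cont ha hb
  have hΦcont : ContinuousOn (fun u => ∫ s in (0:ℝ)..u, w.phi s) (Icc 0 1) :=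
    primitive_contOn w.phi_cont
  have hμcont : ContinuousOn (fun u => w.lam u + π₀ (∫ s in (0:ℝ)..u, w.phi s)) (Icc 0 1) := by
    have h2 : ContinuousOn (fun u => π₀' (∫ s in (0:ℝ)..u, w.phi s)) (Icc 0 1) :=
      π₀'.continuous.comp_continuousOn hΦcont
    simp only [hπ] at h2
    exact w.lam_cont.add h2
  -- Step 1 : μ is constant equal to w.lam 0
  have hstep1 : ∀ u ∈ Icc (0:ℝ) 1,
      w.lam u + π₀ (∫ s in (0:ℝ)..u, w.phi s) = w.lam 0 := by
    have hall : ∀ (α : E₀ →L[ℝ] ℝ), ∀ u ∈ Icc (0:ℝ) 1,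
        α (w.lam u + π₀ (∫ s in (0:ℝ)..u, w.phi s)) = α (w.lam 0) := by
      intro α
      have hcon := const_of_integral_mul_eq_zero
        (fun u => α (w.lam u + π₀ (∫ s in (0:ℝ)..u, w.phi s)))
        (α.continuous.comp_continuousOn hμcont)
        (fun g hg hg0 => by
          have h := keyA π₀ hskew₀ U T₀ T₁ w hw α g hg 0 (zero_mem _)
            (by rw [hg0, zero_smul, sub_zero]; simpa using T₁.zero_mem)
          rw [hg0] at h
          simpa using h)
      intro u hu
      have h0 := hcon 0 h01
      have hu' := hcon u hu
      have hz : α (w.lam 0 + π₀ (∫ s in (0:ℝ)..(0:ℝ), w.phi s)) = α (w.lam 0) := by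
        rw [intervalIntegral.integral_same, map_zero, add_zero]
      rw [hu', ← h0]
      exact hz
    intro u hu
    have hdual : ∀ ℓ : Module.Dual ℝ E₀,
        ℓ (w.lam u + π₀ (∫ s in (0:ℝ)..u, w.phi s) - w.lam 0) = 0 := by
      intro ℓ
      have h := hall (LinearMap.toContinuousLinearMap ℓ) u hu
      have hc : ∀ v : E₀, (LinearMap.toContinuousLinearMap ℓ) v = ℓ v := fun v => rfl
      rw [map_sub, ← hc, ← hc, h, sub_self]
    exact sub_eq_zero.mp ((Module.forall_dual_apply_eq_zero_iff ℝ _).mp hdual)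
  -- Step 2 : boundary identity
  have hstep2 : ∀ (α : E₀ →L[ℝ] ℝ) (x : E₀), x ∈ T₀ → U.symm (x - π₀ α) ∈ T₁ →
      α (w.lam 1) = (∫ s in (0:ℝ)..1, w.phi s) x := by
    intro α x hx hbd
    have hone : (∫ s in (0:ℝ)..1, (1:ℝ)) = 1 := by simp
    have h := keyA π₀ hskew₀ U T₀ T₁ w hw α (fun _ => 1) continuousOn_const x hx
      (by rw [hone, one_smul]; exact hbd)
    have hL : (∫ u in (0:ℝ)..1, (1:ℝ) * α (w.lam u + π₀ (∫ s in (0:ℝ)..u, w.phi s)))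
        = α (w.lam 0) := by
      rw [intervalIntegral.integral_congr (g := fun _ => α (w.lam 0)) ?_]
      · simp
      · intro u hu
        rw [uIcc_of_le (by norm_num : (0:ℝ) ≤ 1)] at hu
        show (1:ℝ) * α (w.lam u + π₀ (∫ s in (0:ℝ)..u, w.phi s)) = α (w.lam 0)
        rw [one_mul, hstep1 u hu]
    rw [hL, hone, one_mul] at h
    have hl1 : w.lam 1 = w.lam 0 - π₀ (∫ s in (0:ℝ)..1, w.phi s) :=
      eq_sub_of_add_eq (hstep1 1 h11)
    rw [hl1, map_sub]
    linarith [h]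
  -- Step 3 : w.lam 0 ∈ T₀
  have hmem0 : w.lam 0 ∈ T₀ := by
    refine (Subspace.forall_mem_dualAnnihilator_apply_eq_zero_iff T₀ (w.lam 0)).mp ?_
    intro ℓ hℓ
    set β : E₀ →L[ℝ] ℝ := LinearMap.toContinuousLinearMap ℓ with hβ
    have hc : ∀ v : E₀, β v = ℓ v := fun v => rfl
    have hβAnn : β ∈ Ann T₀ := by
      intro v hv
      rw [hc]
      exact (Submodule.mem_dualAnnihilator ℓ).mp hℓ v hv
    have hx : π₀ β ∈ T₀ := hT₀ β hβAnn
    have h2 := hstep2 β (π₀ β) hx (by rw [sub_self]; simpa using T₁.zero_mem)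
    have hl1 : w.lam 1 = w.lam 0 - π₀ (∫ s in (0:ℝ)..1, w.phi s) :=
      eq_sub_of_add_eq (hstep1 1 h11)
    have hskew := hskew₀ (∫ s in (0:ℝ)..1, w.phi s) β
    rw [hl1, map_sub] at h2
    rw [← hc]
    linarith [h2, hskew]
  -- Step 4 : U.symm (w.lam 1) ∈ T₁
  have hmem1 : U.symm (w.lam 1) ∈ T₁ := by
    refine (Subspace.forall_mem_dualAnnihilator_apply_eq_zero_iff T₁
      (U.symm (w.lam 1))).mp ?_
    intro ℓ hℓ
    set γ : E₁ →L[ℝ] ℝ := LinearMap.toContinuousLinearMap ℓ with hγ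
    have hc : ∀ v : E₁, γ v = ℓ v := fun v => rfl
    have hγAnn : γ ∈ Ann T₁ := by
      intro v hv
      rw [hc]
      exact (Submodule.mem_dualAnnihilator ℓ).mp hℓ v hv
    set α : E₀ →L[ℝ] ℝ := γ.comp (U.symm : E₀ →L[ℝ] E₁) with hα
    have hcomp : α.comp (U : E₁ →L[ℝ] E₀) = γ := by
      ext e
      simp [hα]
    have hπα : π₀ α = U (π₁ γ) := by rw [← hU α, hcomp]
    have hbd : U.symm ((0:E₀) - π₀ α) ∈ T₁ := by
      rw [zero_sub, map_neg, hπα, ContinuousLinearEquiv.symm_apply_apply]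
      exact neg_mem (hT₁ γ hγAnn)
    have h2 := hstep2 α 0 (zero_mem _) hbd
    rw [map_zero] at h2
    rw [← hc]
    have : γ (U.symm (w.lam 1)) = α (w.lam 1) := rfl
    rw [this, h2]
  exact ⟨fun u hu => eq_sub_of_add_eq (hstep1 u hu), hmem0, hmem1⟩
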